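/- Let α, a, b > 0, let i ∈ ℕ, and let x ≥ 0. Then ∫_x^∞ e^{−αt}(a+bt)^i dt ≤ (1/α)·e^{−αx}·Σ_{ν=0}^{i} (a+bx)^{i−ν}·(ib/α)^ν, and ∫_x^∞ ∫_t^∞ e^{−ατ}(a+bτ)^i dτ dt ≤ (1/α²)·e^{−αx}·Σ_{ν=0}^{i} Σ_{ℓ=0}^{i−ν} (ib/α)^ν·((i−ν)b/α)^ℓ·(a+bx)^{i−ν−ℓ}. -/

import Mathlib

open Set MeasureTheory Finset Filter Asymptotics

namespace Stmt3Aux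

variable {α a b : ℝ}

lemma isBigO_aux (hα : 0 < α) (hb : 0 < b) (i : ℕ) :
    (fun t => Real.exp (-α * t) * (a + b * t) ^ i) =O[atTop]
      fun t => Real.exp (-(α / 2) * t) := by
  have hc : 0 < α / (2 * b) := by positivity
  have h0 : (fun u : ℝ => u ^ i) =o[atTop] fun u => Real.exp (α / (2 * b) * u) :=
    isLittleO_pow_exp_pos_mul_atTop i hc
  have htend : Tendsto (fun t : ℝ => a + b * t) atTop atTop :=
    tendsto_atTop_add_const_left _ a (tendsto_id.const_mul_atTop hb)
  have h1 : (fun t : ℝ => (a + b * t) ^ i) =o[atTop]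
      fun t => Real.exp (α / (2 * b) * a) * Real.exp (α / 2 * t) := by
    refine (h0.comp_tendsto htend).congr (fun t => rfl) fun t => ?_
    simp only [Function.comp]
    rw [← Real.exp_add]
    congr 1
    field_simp
  have h2 : (fun t : ℝ => (a + b * t) ^ i) =O[atTop] fun t => Real.exp (α / 2 * t) :=
    h1.isBigO.trans (isBigO_const_mul_self _ _ _)
  have h3 := h2.mul (isBigO_refl (fun t : ℝ => Real.exp (-α * t)) atTop)
  refine h3.congr (fun t => mul_comm _ _) fun t => ?_
  rw [← Real.exp_add]
  congr 1
  ring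

lemma tendsto_aux (hα : 0 < α) (hb : 0 < b) (i : ℕ) :
    Tendsto (fun t => Real.exp (-α * t) * (a + b * t) ^ i) atTop (nhds 0) := by
  refine (isBigO_aux hα hb i).trans_tendsto ?_
  exact Real.tendsto_exp_atBot.comp
    (tendsto_id.const_mul_atTop_of_neg (by linarith : -(α / 2) < 0))

lemma int_aux (hα : 0 < α) (hb : 0 < b) (i : ℕ) (x : ℝ) :
    IntegrableOn (fun t => Real.exp (-α * t) * (a + b * t) ^ i) (Ioi x) := by
  refine integrable_of_isBigO_exp_neg (half_pos hα) ?_ (isBigO_aux hα hb i)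
  fun_prop

lemma base_aux (hα : 0 < α) (x : ℝ) :
    (∫ t in Ioi x, Real.exp (-α * t)) = 1 / α * Real.exp (-α * x) := by
  have hderiv : ∀ t ∈ Ici x,
      HasDerivAt (fun t : ℝ => -(1 / α) * Real.exp (-α * t)) (Real.exp (-α * t)) t := by
    intro t _
    have h1 : HasDerivAt (fun s : ℝ => Real.exp (-α * s))
        (Real.exp (-α * t) * (-α * 1)) t :=
      ((hasDerivAt_id t).const_mul (-α)).exp
    have h2 := h1.const_mul (-(1 / α))
    refine h2.congr_deriv ?_
    field_simp
  have htend : Tendsto (fun t : ℝ => -(1 / α) * Real.exp (-α * t)) atTop (nhds 0) := by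
    have := (tendsto_aux (a := 1) (b := 1) hα one_pos 0).const_mul (-(1 / α))
    simpa using this
  have hint : IntegrableOn (fun t : ℝ => Real.exp (-α * t)) (Ioi x) :=
    exp_neg_integrableOn_Ioi x hα
  have key := integral_Ioi_of_hasDerivAt_of_tendsto' hderiv hint htend
  rw [key]
  ring

lemma rec_aux (hα : 0 < α) (hb : 0 < b) (i : ℕ) (x : ℝ) :
    (∫ t in Ioi x, Real.exp (-α * t) * (a + b * t) ^ (i + 1)) =
      1 / α * Real.exp (-α * x) * (a + b * x) ^ (i + 1)
        + ((i : ℝ) + 1) * b / α * ∫ t in Ioi x, Real.exp (-α * t) * (a + b * t) ^ i := by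
  have hne : α ≠ 0 := hα.ne'
  set c : ℝ := ((i : ℝ) + 1) * b / α with hc
  have hderiv : ∀ t ∈ Ici x,
      HasDerivAt (fun t : ℝ => -(1 / α) * (Real.exp (-α * t) * (a + b * t) ^ (i + 1)))
        (Real.exp (-α * t) * (a + b * t) ^ (i + 1)
          - c * (Real.exp (-α * t) * (a + b * t) ^ i)) t := by
    intro t _
    have h1 : HasDerivAt (fun s : ℝ => Real.exp (-α * s))
        (Real.exp (-α * t) * (-α * 1)) t :=
      ((hasDerivAt_id t).const_mul (-α)).exp
    have h2 : HasDerivAt (fun s : ℝ => (a + b * s) ^ (i + 1))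
        (((i : ℝ) + 1) * (a + b * t) ^ i * (b * 1)) t := by
      have := (((hasDerivAt_id t).const_mul b).const_add a).pow (i + 1)
      exact this.congr_deriv (by simp)
    have h3 := (h1.mul h2).const_mul (-(1 / α))
    refine h3.congr_deriv ?_
    rw [hc]
    field_simp
    ring
  have htend : Tendsto
      (fun t : ℝ => -(1 / α) * (Real.exp (-α * t) * (a + b * t) ^ (i + 1)))
      atTop (nhds 0) := by
    have := (tendsto_aux (a := a) hα hb (i + 1)).const_mul (-(1 / α))
    simpa using this
  have hint : IntegrableOn
      (fun t => Real.exp (-α * t) * (a + b * t) ^ (i + 1)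
        - c * (Real.exp (-α * t) * (a + b * t) ^ i)) (Ioi x) :=
    (int_aux hα hb (i + 1) x).sub ((int_aux hα hb i x).const_mul c)
  have key := integral_Ioi_of_hasDerivAt_of_tendsto' hderiv hint htend
  rw [integral_sub (int_aux hα hb (i + 1) x) ((int_aux hα hb i x).const_mul c),
    integral_const_mul] at key
  linear_combination key

lemma bound1 (hα : 0 < α) (ha : 0 < a) (hb : 0 < b) (i : ℕ) :
    ∀ (x : ℝ), 0 ≤ x →
    (∫ t in Ioi x, Real.exp (-α * t) * (a + b * t) ^ i) ≤
      1 / α * Real.exp (-α * x) *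
        ∑ ν ∈ range (i + 1), (a + b * x) ^ (i - ν) * ((i : ℝ) * b / α) ^ ν := by
  induction i with
  | zero =>
    intro x hx
    simp only [pow_zero, mul_one, range_one, sum_singleton, Nat.zero_sub, Nat.cast_zero,
      zero_mul, zero_div]
    rw [base_aux hα]
    simp
  | succ i ih =>
    intro x hx
    have hP : (0 : ℝ) ≤ a + b * x := by positivity
    have hc : (0 : ℝ) ≤ ((i : ℝ) + 1) * b / α := by positivity
    have he : (0 : ℝ) ≤ 1 / α * Real.exp (-α * x) := by positivity
    rw [rec_aux hα hb i x]
    push_cast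
    calc 1 / α * Real.exp (-α * x) * (a + b * x) ^ (i + 1)
          + ((i : ℝ) + 1) * b / α * ∫ t in Ioi x, Real.exp (-α * t) * (a + b * t) ^ i
        ≤ 1 / α * Real.exp (-α * x) * (a + b * x) ^ (i + 1)
          + ((i : ℝ) + 1) * b / α * (1 / α * Real.exp (-α * x) *
            ∑ ν ∈ range (i + 1), (a + b * x) ^ (i - ν) * ((i : ℝ) * b / α) ^ ν) := by
          gcongr
          exact ih x hx
      _ = 1 / α * Real.exp (-α * x) * ((a + b * x) ^ (i + 1)
            + ∑ ν ∈ range (i + 1),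
              (a + b * x) ^ (i - ν) * (((i : ℝ) + 1) * b / α * ((i : ℝ) * b / α) ^ ν)) := by
          rw [Finset.mul_sum, Finset.mul_sum]
          rw [mul_add]
          congr 1
          rw [Finset.mul_sum]
          refine Finset.sum_congr rfl fun ν _ => by ring
      _ ≤ 1 / α * Real.exp (-α * x) * ((a + b * x) ^ (i + 1)
            + ∑ ν ∈ range (i + 1),
              (a + b * x) ^ (i - ν) * (((i : ℝ) + 1) * b / α) ^ (ν + 1)) := by
          gcongr with ν hν
          calc ((i : ℝ) + 1) * b / α * ((i : ℝ) * b / α) ^ ν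
              ≤ ((i : ℝ) + 1) * b / α * (((i : ℝ) + 1) * b / α) ^ ν := by
                gcongr <;> first | positivity | linarith
            _ = (((i : ℝ) + 1) * b / α) ^ (ν + 1) := by
                rw [pow_succ']
      _ = 1 / α * Real.exp (-α * x) *
            ∑ ν ∈ range (i + 1 + 1),
              (a + b * x) ^ (i + 1 - ν) * (((i : ℝ) + 1) * b / α) ^ ν := by
          conv_rhs => rw [Finset.sum_range_succ']
          simp only [Nat.succ_sub_succ, pow_zero, mul_one, Nat.sub_zero]
          ring

end Stmt3Aux

open Stmt3Aux

/-- Elementary estimates for single and iterated integrals of exponentially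
decaying functions multiplied by polynomial factors on `[x, ∞)`. -/
theorem stmt_3 (α a b : ℝ) (hα : 0 < α) (ha : 0 < a) (hb : 0 < b)
    (i : ℕ) (x : ℝ) (hx : 0 ≤ x) :
    (∫ t in Ici x, Real.exp (-α * t) * (a + b * t) ^ i) ≤
      (1 / α) * Real.exp (-α * x) *
        ∑ ν ∈ range (i + 1), (a + b * x) ^ (i - ν) * ((i : ℝ) * b / α) ^ ν ∧
    (∫ t in Ici x, ∫ τ in Ici t, Real.exp (-α * τ) * (a + b * τ) ^ i) ≤
      (1 / α ^ 2) * Real.exp (-α * x) *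
        ∑ ν ∈ range (i + 1), ∑ ℓ ∈ range (i - ν + 1),
          ((i : ℝ) * b / α) ^ ν * (((i - ν : ℕ) : ℝ) * b / α) ^ ℓ *
            (a + b * x) ^ (i - ν - ℓ) := by
  constructor
  · rw [integral_Ici_eq_integral_Ioi]
    exact bound1 hα ha hb i x hx
  · set g : ℝ → ℝ := fun t => ∫ τ in Ici t, Real.exp (-α * τ) * (a + b * τ) ^ i with hgdef
    set h : ℝ → ℝ := fun t => ∑ ν ∈ range (i + 1),
      (1 / α * ((i : ℝ) * b / α) ^ ν) * (Real.exp (-α * t) * (a + b * t) ^ (i - ν)) with hhdef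
    have hEcont : Continuous fun t : ℝ => Real.exp (-α * t) * (a + b * t) ^ i := by fun_prop
    have hsplit : ∀ t, x ≤ t → g t = g x - ∫ s in x..t,
        Real.exp (-α * s) * (a + b * s) ^ i := by
      intro t ht
      have h1 : (∫ τ in Ioi x, Real.exp (-α * τ) * (a + b * τ) ^ i)
          = (∫ τ in Ioc x t, Real.exp (-α * τ) * (a + b * τ) ^ i)
            + ∫ τ in Ioi t, Real.exp (-α * τ) * (a + b * τ) ^ i := by
        rw [← setIntegral_union (Ioc_disjoint_Ioi le_rfl) measurableSet_Ioi
          ((int_aux hα hb i x).mono_set Ioc_subset_Ioi_self) (int_aux hα hb i t),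
          Ioc_union_Ioi_eq_Ioi ht]
      rw [hgdef]
      simp only [integral_Ici_eq_integral_Ioi]
      rw [intervalIntegral.integral_of_le ht]
      linarith [h1]
    have hgcont : ContinuousOn g (Ici x) := by
      have hcont : Continuous fun t => g x - ∫ s in x..t,
          Real.exp (-α * s) * (a + b * s) ^ i :=
        continuous_const.sub
          (intervalIntegral.continuous_primitive (fun c d => hEcont.intervalIntegrable c d) x)
      exact hcont.continuousOn.congr fun t ht => hsplit t ht
    have hg0 : ∀ t ∈ Ici x, 0 ≤ g t := by
      intro t ht
      refine setIntegral_nonneg measurableSet_Ici fun τ hτ => ?_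
      have : (0 : ℝ) ≤ a + b * τ := by
        have : (0 : ℝ) ≤ τ := le_trans (hx.trans ht) hτ
        positivity
      positivity
    have hgh : ∀ t ∈ Ici x, g t ≤ h t := by
      intro t ht
      have ht0 : 0 ≤ t := hx.trans ht
      have hb1 := bound1 hα ha hb i t ht0
      rw [hgdef]
      simp only
      rw [integral_Ici_eq_integral_Ioi]
      refine hb1.trans_eq ?_
      rw [hhdef, Finset.mul_sum]
      exact Finset.sum_congr rfl fun ν _ => by ring
    have hint' : ∀ ν : ℕ, IntegrableOn
        (fun t => (1 / α * ((i : ℝ) * b / α) ^ ν)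
          * (Real.exp (-α * t) * (a + b * t) ^ (i - ν))) (Ici x) := by
      intro ν
      rw [integrableOn_Ici_iff_integrableOn_Ioi]
      exact (int_aux hα hb (i - ν) x).const_mul _
    have hhint : IntegrableOn h (Ici x) := by
      rw [hhdef]
      exact integrable_finset_sum _ fun ν _ => hint' ν
    have hgint : IntegrableOn g (Ici x) := by
      refine Integrable.mono' hhint (hgcont.aestronglyMeasurable measurableSet_Ici) ?_
      filter_upwards [ae_restrict_mem measurableSet_Ici] with t ht
      rw [Real.norm_eq_abs, abs_of_nonneg (hg0 t ht)]
      exact hgh t ht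
    calc (∫ t in Ici x, g t)
        ≤ ∫ t in Ici x, h t := setIntegral_mono_on hgint hhint measurableSet_Ici hgh
      _ = ∑ ν ∈ range (i + 1), (1 / α * ((i : ℝ) * b / α) ^ ν)
            * ∫ t in Ici x, Real.exp (-α * t) * (a + b * t) ^ (i - ν) := by
          rw [hhdef]
          rw [integral_finset_sum _ fun ν _ => hint' ν]
          exact Finset.sum_congr rfl fun ν _ => integral_const_mul _ _
      _ ≤ ∑ ν ∈ range (i + 1), (1 / α * ((i : ℝ) * b / α) ^ ν)
            * (1 / α * Real.exp (-α * x) *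
              ∑ ℓ ∈ range (i - ν + 1),
                (a + b * x) ^ (i - ν - ℓ) * (((i - ν : ℕ) : ℝ) * b / α) ^ ℓ) := by
          refine Finset.sum_le_sum fun ν _ => ?_
          refine mul_le_mul_of_nonneg_left ?_ (by positivity)
          rw [integral_Ici_eq_integral_Ioi]
          exact bound1 hα ha hb (i - ν) x hx
      _ = (1 / α ^ 2) * Real.exp (-α * x) *
            ∑ ν ∈ range (i + 1), ∑ ℓ ∈ range (i - ν + 1),
              ((i : ℝ) * b / α) ^ ν * (((i - ν : ℕ) : ℝ) * b / α) ^ ℓ *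
                (a + b * x) ^ (i - ν - ℓ) := by
          simp only [Finset.mul_sum]
          refine Finset.sum_congr rfl fun ν _ => ?_
          refine Finset.sum_congr rfl fun ℓ _ => ?_
          ring
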